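/- Suppose a Hilbert space H has finite dimension d with orthonormal basis {e_j}, and D, D_⋆ are the diagonal operators De_j = λ_j e_j, D_⋆ e_j = ν_j e_j with λ_j, ν_j ∈ 𝔻. Fix N ≥ 1 and an arbitrary operator A on ⊕_{n=0}^N H. Let S be the truncated shift on ⊕_{n=0}^N H (block nilpotent Jordan shift of index N+1), T₀ = ⊕_{n=0}^N D + S, T₁ = ⊕_{n=0}^N D_⋆ + S*, and T = [[T₁, A],[0, T₀]]. If the λ_j are pairwise distinct, the ν_j are pairwise distinct, and λ_j ≠ ν_k for all j,k, then T is similar to T₀ ⊕ T₁, hence similar to the model operator T_B where B = ∏_{j=1}^d b_{λ_j}^{N+1} b_{ν_j}^{N+1}. -/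

import Mathlib

open Finset

lemma piLp_sum_apply {κ ι : Type*} {E : ι → Type*} [∀ i, SeminormedAddCommGroup (E i)]
    (s : Finset κ) (f : κ → PiLp 2 E) (j : ι) :
    (∑ i ∈ s, f i) j = ∑ i ∈ s, f i j :=
  by rw [WithLp.ofLp_sum]; exact Finset.sum_apply j s _

lemma eucl_decomp {ι : Type*} [Fintype ι] [DecidableEq ι] (x : EuclideanSpace ℂ ι) :
    ∑ i, x i • EuclideanSpace.single i (1:ℂ) = x := by
  ext j
  rw [piLp_sum_apply]
  simp [EuclideanSpace.single_apply]

lemma clm_coord {ι κ : Type*} [Fintype ι] [DecidableEq ι]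
    (L : EuclideanSpace ℂ ι →L[ℂ] EuclideanSpace ℂ κ) (x : EuclideanSpace ℂ ι) (k : κ) :
    L x k = ∑ i, x i * L (EuclideanSpace.single i 1) k := by
  conv_lhs => rw [← eucl_decomp x]
  rw [map_sum, piLp_sum_apply]
  simp

lemma diag_coord {d : ℕ} (lam : Fin d → ℂ)
    (D : EuclideanSpace ℂ (Fin d) →L[ℂ] EuclideanSpace ℂ (Fin d))
    (hD : ∀ j, D (EuclideanSpace.single j 1) = lam j • EuclideanSpace.single j 1)
    (x : EuclideanSpace ℂ (Fin d)) (j : Fin d) :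
    D x j = lam j * x j := by
  rw [clm_coord]
  simp only [hD, PiLp.smul_apply, EuclideanSpace.single_apply, smul_eq_mul]
  rw [Finset.sum_eq_single j]
  · simp [mul_comm]
  · intro i _ hi; simp [Ne.symm hi]
  · simp

lemma jordan_coord {d N : ℕ} (lam nu : Fin d → ℂ)
    (J : EuclideanSpace ℂ (Fin d × Fin 2 × Fin (N + 1)) →L[ℂ]
          EuclideanSpace ℂ (Fin d × Fin 2 × Fin (N + 1)))
    (hJ : ∀ (j : Fin d) (s : Fin 2) (n : Fin (N + 1)),
        J (EuclideanSpace.single (j, s, n) 1) =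
          (if s = 0 then lam j else nu j) • EuclideanSpace.single (j, s, n) 1 +
            (if 0 < (n : ℕ) then
              EuclideanSpace.single
                (j, s, ⟨(n : ℕ) - 1, lt_of_le_of_lt (Nat.sub_le _ _) n.isLt⟩) 1 else 0))
    (x : EuclideanSpace ℂ (Fin d × Fin 2 × Fin (N + 1)))
    (j : Fin d) (s : Fin 2) (n : Fin (N + 1)) :
    J x (j, s, n) = (if s = 0 then lam j else nu j) * x (j, s, n) +
      (if h : (n : ℕ) + 1 < N + 1 then x (j, s, ⟨(n : ℕ) + 1, h⟩) else 0) := by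
  rw [clm_coord]
  have : ∀ i : Fin d × Fin 2 × Fin (N + 1),
      x i * J (EuclideanSpace.single i 1) (j, s, n) =
      x i * ((if i.2.1 = 0 then lam i.1 else nu i.1) *
            (if (j, s, n) = i then 1 else 0)) +
      x i * (if 0 < (i.2.2 : ℕ) then
          (if (j, s, n) = (i.1, i.2.1, (⟨(i.2.2 : ℕ) - 1,
            lt_of_le_of_lt (Nat.sub_le _ _) i.2.2.isLt⟩ : Fin (N+1))) then (1:ℂ) else 0) else 0) := by
    rintro ⟨j', s', n'⟩
    rw [hJ]
    rw [PiLp.add_apply, PiLp.smul_apply, smul_eq_mul, mul_add]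
    congr 2
    · rw [EuclideanSpace.single_apply]
    · rw [apply_ite (fun (w : EuclideanSpace ℂ (Fin d × Fin 2 × Fin (N+1))) => w (j, s, n))]
      simp [EuclideanSpace.single_apply]
  rw [Finset.sum_congr rfl (fun i _ => this i), Finset.sum_add_distrib]
  congr 1
  · rw [Finset.sum_eq_single (j, s, n)]
    · simp [mul_comm]
    · rintro ⟨j', s', n'⟩ _ hi
      simp [Ne.symm hi]
    · simp
  · by_cases h : (n : ℕ) + 1 < N + 1
    · rw [dif_pos h, Finset.sum_eq_single (j, s, (⟨(n:ℕ)+1, h⟩ : Fin (N+1)))]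
      · simp only
        rw [if_pos (by simp), if_pos]
        · ring
        · ext <;> simp
      · rintro ⟨j', s', n'⟩ _ hi
        simp only
        split_ifs with h1 h2
        · exfalso
          apply hi
          have e1 : j = j' := congrArg Prod.fst h2
          have e2 : s = s' := congrArg (fun p : Fin d × Fin 2 × Fin (N+1) => p.2.1) h2
          have e3 : (n : ℕ) = (n' : ℕ) - 1 := by
            have := congrArg (fun p : Fin d × Fin 2 × Fin (N+1) => (p.2.2 : ℕ)) h2
            simpa using this
          have e4 : n' = (⟨(n:ℕ)+1, h⟩ : Fin (N+1)) := by ext; simp; omega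
          rw [e1, e2, e4]
        · ring
        · ring
      · simp
    · rw [dif_neg h, Finset.sum_eq_zero]
      rintro ⟨j', s', n'⟩ _
      simp only
      split_ifs with h1 h2
      · exfalso
        have h3 : (n:ℕ) = (n':ℕ) - 1 := by
          have := congrArg (fun p : Fin d × Fin 2 × Fin (N+1) => (p.2.2 : ℕ)) h2
          simpa using this
        omega
      · ring
      · ring

lemma P_add_apply2 {N d : ℕ} (x y : PiLp 2 (fun _ : Fin (N+1) => EuclideanSpace ℂ (Fin d)))
    (m : Fin (N+1)) (k : Fin d) : (x + y) m k = x m k + y m k := rfl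

lemma P_smul_apply2 {N d : ℕ} (c : ℂ) (x : PiLp 2 (fun _ : Fin (N+1) => EuclideanSpace ℂ (Fin d)))
    (m : Fin (N+1)) (k : Fin d) : (c • x) m k = c * x m k := rfl

lemma P_dite_apply2 {N d : ℕ} (c : Prop) [Decidable c]
    (a : c → PiLp 2 (fun _ : Fin (N+1) => EuclideanSpace ℂ (Fin d)))
    (m : Fin (N+1)) (k : Fin d) :
    (if h : c then a h else 0) m k = (if h : c then a h m k else 0) := by
  split_ifs <;> rfl

lemma trunc_aux1 (N m n : ℕ) (hm : m < N+1) (hn : n < N+1) (e : ℂ) :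
    (if _ : m+1 < N+1 then (if m+1 = n then e else 0) else 0)
    = (if _ : 0 < n then (if m = n-1 then e else 0) else 0) := by
  split_ifs <;> first | rfl | omega

set_option maxHeartbeats 1000000 in
/-- Lemma 4.3: a block upper-triangular perturbation `T = [[T₁, A],[0, T₀]]` of the pair of
"truncated Jordan" operators `T₀ = ⊕D + S`, `T₁ = ⊕D⋆ + S*` (with diagonal operators `D, D⋆`
having pairwise distinct eigenvalues `λ_j`, `ν_j` in `𝔻`, mutually distinct from each other)
is similar to `T₁ ⊕ T₀`, and hence similar to the model operator `T_B` of the Blaschke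
product `B = ∏_j b_{λ_j}^{N+1} b_{ν_j}^{N+1}`; the latter is expressed by similarity to the
direct sum `J` of the Jordan blocks of size `N+1` with eigenvalues `λ_j` and `ν_j`. -/
theorem truncated_jordan_block_perturbation_similar
    (d N : ℕ) (hd : 1 ≤ d) (hN : 1 ≤ N)
    (lam nu : Fin d → ℂ)
    (hball : ∀ j, ‖lam j‖ < 1 ∧ ‖nu j‖ < 1)
    (hlam : Function.Injective lam) (hnu : Function.Injective nu)
    (hlamnu : ∀ j k, lam j ≠ nu k)
    (D Dstar : EuclideanSpace ℂ (Fin d) →L[ℂ] EuclideanSpace ℂ (Fin d))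
    (hD : ∀ j, D (EuclideanSpace.single j 1) = lam j • EuclideanSpace.single j 1)
    (hDstar : ∀ j, Dstar (EuclideanSpace.single j 1) = nu j • EuclideanSpace.single j 1)
    (T₀ T₁ A : PiLp 2 (fun _ : Fin (N + 1) => EuclideanSpace ℂ (Fin d)) →L[ℂ]
      PiLp 2 (fun _ : Fin (N + 1) => EuclideanSpace ℂ (Fin d)))
    (hT₀ : ∀ x, ∀ n : Fin (N + 1), T₀ x n =
      D (x n) + (if h : (n : ℕ) + 1 < N + 1 then x ⟨(n : ℕ) + 1, h⟩ else 0))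
    (hT₁ : ∀ x, ∀ n : Fin (N + 1), T₁ x n =
      Dstar (x n) + (if 0 < (n : ℕ) then
        x ⟨(n : ℕ) - 1, lt_of_le_of_lt (Nat.sub_le _ _) n.isLt⟩ else 0))
    (T : (PiLp 2 (fun _ : Fin (N + 1) => EuclideanSpace ℂ (Fin d)) ×
          PiLp 2 (fun _ : Fin (N + 1) => EuclideanSpace ℂ (Fin d))) →L[ℂ]
        (PiLp 2 (fun _ : Fin (N + 1) => EuclideanSpace ℂ (Fin d)) ×
          PiLp 2 (fun _ : Fin (N + 1) => EuclideanSpace ℂ (Fin d))))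
    (hT : ∀ v, T v = (T₁ v.1 + A v.2, T₀ v.2)) :
    (∃ X : (PiLp 2 (fun _ : Fin (N + 1) => EuclideanSpace ℂ (Fin d)) ×
            PiLp 2 (fun _ : Fin (N + 1) => EuclideanSpace ℂ (Fin d))) ≃L[ℂ]
          (PiLp 2 (fun _ : Fin (N + 1) => EuclideanSpace ℂ (Fin d)) ×
            PiLp 2 (fun _ : Fin (N + 1) => EuclideanSpace ℂ (Fin d))),
        ∀ v, X (T v) = (T₁ (X v).1, T₀ (X v).2)) ∧
    (∀ J : EuclideanSpace ℂ (Fin d × Fin 2 × Fin (N + 1)) →L[ℂ]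
          EuclideanSpace ℂ (Fin d × Fin 2 × Fin (N + 1)),
      (∀ (j : Fin d) (s : Fin 2) (n : Fin (N + 1)),
        J (EuclideanSpace.single (j, s, n) 1) =
          (if s = 0 then lam j else nu j) • EuclideanSpace.single (j, s, n) 1 +
            (if 0 < (n : ℕ) then
              EuclideanSpace.single
                (j, s, ⟨(n : ℕ) - 1, lt_of_le_of_lt (Nat.sub_le _ _) n.isLt⟩) 1 else 0)) →
      ∃ X : (PiLp 2 (fun _ : Fin (N + 1) => EuclideanSpace ℂ (Fin d)) ×
            PiLp 2 (fun _ : Fin (N + 1) => EuclideanSpace ℂ (Fin d))) ≃L[ℂ]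
          EuclideanSpace ℂ (Fin d × Fin 2 × Fin (N + 1)),
        ∀ v, X (T v) = J (X v)) := by
  -- abbreviations
  set P := PiLp 2 (fun _ : Fin (N + 1) => EuclideanSpace ℂ (Fin d)) with hP
  -- coordinate formulas
  have hT₀c : ∀ (x : P) (n : Fin (N+1)) (jj : Fin d), T₀ x n jj =
      lam jj * x n jj + (if h : (n:ℕ)+1 < N+1 then x ⟨(n:ℕ)+1, h⟩ jj else 0) := by
    intro x n jj
    rw [hT₀, PiLp.add_apply, diag_coord lam D hD]
    congr 1
    rw [apply_dite (fun (w : EuclideanSpace ℂ (Fin d)) => w jj)]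
    split_ifs <;> rfl
  have hT₁c : ∀ (x : P) (n : Fin (N+1)) (jj : Fin d), T₁ x n jj =
      nu jj * x n jj + (if 0 < (n:ℕ) then
        x ⟨(n:ℕ)-1, lt_of_le_of_lt (Nat.sub_le _ _) n.isLt⟩ jj else 0) := by
    intro x n jj
    rw [hT₁, PiLp.add_apply, diag_coord nu Dstar hDstar]
    congr 1
    rw [apply_ite (fun (w : EuclideanSpace ℂ (Fin d)) => w jj)]
    split_ifs <;> rfl
  -- the canonical basis vectors of P
  obtain ⟨f, hf⟩ : ∃ f : Fin d → Fin (N+1) → P, ∀ j n m, f j n m =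
      if m = n then EuclideanSpace.single j 1 else 0 :=
    ⟨fun j n => WithLp.toLp 2 (fun m => if m = n then EuclideanSpace.single j 1 else 0 :
      ∀ _ : Fin (N+1), EuclideanSpace ℂ (Fin d)), fun _ _ _ => rfl⟩
  have hfc : ∀ (j : Fin d) (n m : Fin (N+1)) (k : Fin d), f j n m k =
      if (m:ℕ) = (n:ℕ) then (if k = j then 1 else 0) else 0 := by
    intro j n m k
    rw [hf, apply_ite (fun (w : EuclideanSpace ℂ (Fin d)) => w k)]
    by_cases hm : (m:ℕ) = (n:ℕ)
    · rw [if_pos (Fin.ext hm), if_pos hm, EuclideanSpace.single_apply]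
    · rw [if_neg (fun he => hm (congrArg Fin.val he)), if_neg hm]
      rfl
  have hPdecomp : ∀ x : P, ∑ n : Fin (N+1), ∑ j : Fin d, x n j • f j n = x := by
    intro x
    refine PiLp.ext fun m => ?_
    rw [piLp_sum_apply]
    have h1 : ∀ n : Fin (N+1), (∑ j : Fin d, x n j • f j n) m
        = ∑ j : Fin d, x n j • f j n m := fun n => piLp_sum_apply _ _ _
    rw [Finset.sum_congr rfl fun n _ => h1 n]
    ext k
    rw [piLp_sum_apply]
    have h2 : ∀ n, (∑ j : Fin d, x n j • f j n m) k = ∑ j : Fin d, x n j * f j n m k := by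
      intro n
      rw [piLp_sum_apply]
      simp
    rw [Finset.sum_congr rfl fun n _ => h2 n]
    simp only [hfc]
    rw [Finset.sum_eq_single m]
    · rw [Finset.sum_eq_single k]
      · simp
      · intro b _ hb
        simp [Ne.symm hb]
      · simp
    · intro n _ hn
      have : ¬ ((m:ℕ) = (n:ℕ)) := fun h => hn (Fin.ext h).symm
      simp [this]
    · simp
  -- action of T₀ on the basis vectors
  have hT₀f : ∀ (j : Fin d) (n : Fin (N+1)), T₀ (f j n) = lam j • f j n +
      (if h : 0 < (n:ℕ) then f j ⟨(n:ℕ)-1, lt_of_le_of_lt (Nat.sub_le _ _) n.isLt⟩ else 0) := by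
    intro j n
    refine PiLp.ext fun m => ?_
    ext k
    rw [PiLp.add_apply, PiLp.smul_apply, hT₀c,
      apply_dite (fun (w : P) => w m), PiLp.add_apply, PiLp.smul_apply,
      apply_dite (fun (w : EuclideanSpace ℂ (Fin d)) => w k)]
    simp only [hfc, PiLp.smul_apply, smul_eq_mul]
    have hz : ((0 : P) m) k = 0 := rfl
    rw [hz]
    congr 1
    · by_cases hkj : k = j
      · subst hkj; rfl
      · simp [hkj]
    · exact trunc_aux1 N m n m.isLt n.isLt _
  -- solving the Sylvester equation T₁ Y - Y T₀ = A
  obtain ⟨Y, hY⟩ : ∃ Y : P →ₗ[ℂ] P,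
      T₁.toLinearMap ∘ₗ Y - Y ∘ₗ T₀.toLinearMap = A.toLinearMap := by
    set L : (P →ₗ[ℂ] P) →ₗ[ℂ] (P →ₗ[ℂ] P) :=
      { toFun := fun Y => T₁.toLinearMap ∘ₗ Y - Y ∘ₗ T₀.toLinearMap
        map_add' := by
          intro Y Z
          refine LinearMap.ext fun x => ?_
          simp only [LinearMap.sub_apply, LinearMap.comp_apply, LinearMap.add_apply,
            ContinuousLinearMap.coe_coe, map_add]
          abel
        map_smul' := by
          intro c Y
          refine LinearMap.ext fun x => ?_
          simp only [LinearMap.sub_apply, LinearMap.comp_apply, LinearMap.smul_apply,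
            ContinuousLinearMap.coe_coe, map_smul, RingHom.id_apply, smul_sub] } with hLdef
    have hinj : Function.Injective L := by
      rw [injective_iff_map_eq_zero]
      intro Y hY0
      have hc : ∀ x : P, T₁ (Y x) = Y (T₀ x) := by
        intro x
        have h1 := LinearMap.congr_fun hY0 x
        simp only [hLdef, LinearMap.coe_mk, AddHom.coe_mk, LinearMap.sub_apply,
          LinearMap.comp_apply, ContinuousLinearMap.coe_coe, LinearMap.zero_apply,
          sub_eq_zero] at h1
        exact h1
      have hrel : ∀ (j k : Fin d) (m n : Fin (N+1)),
          (nu k - lam j) * Y (f j n) m k =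
          (if _ : 0 < (n:ℕ) then
            Y (f j ⟨(n:ℕ)-1, lt_of_le_of_lt (Nat.sub_le _ _) n.isLt⟩) m k else 0)
          - (if 0 < (m:ℕ) then
            Y (f j n) ⟨(m:ℕ)-1, lt_of_le_of_lt (Nat.sub_le _ _) m.isLt⟩ k else 0) := by
        intro j k m n
        have e1 := hT₁c (Y (f j n)) m k
        have e2v : Y (T₀ (f j n)) = lam j • Y (f j n) +
            (if _ : 0 < (n:ℕ) then
              Y (f j ⟨(n:ℕ)-1, lt_of_le_of_lt (Nat.sub_le _ _) n.isLt⟩) else 0) := by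
          rw [hT₀f j n, map_add, map_smul]
          congr 1
          split_ifs with hn
          · rfl
          · exact map_zero Y
        have e2 : Y (T₀ (f j n)) m k = lam j * Y (f j n) m k +
            (if _ : 0 < (n:ℕ) then
              Y (f j ⟨(n:ℕ)-1, lt_of_le_of_lt (Nat.sub_le _ _) n.isLt⟩) m k else 0) := by
          rw [e2v, P_add_apply2, P_smul_apply2, P_dite_apply2]
        have e3 : nu k * Y (f j n) m k +
            (if 0 < (m:ℕ) then
              Y (f j n) ⟨(m:ℕ)-1, lt_of_le_of_lt (Nat.sub_le _ _) m.isLt⟩ k else 0) =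
            lam j * Y (f j n) m k +
            (if _ : 0 < (n:ℕ) then
              Y (f j ⟨(n:ℕ)-1, lt_of_le_of_lt (Nat.sub_le _ _) n.isLt⟩) m k else 0) := by
          rw [← e1, ← e2, hc]
        linear_combination e3
      have key : ∀ (t : ℕ) (j k : Fin d) (m n : Fin (N+1)), (m:ℕ) + (n:ℕ) ≤ t →
          Y (f j n) m k = 0 := by
        intro t
        induction t using Nat.strong_induction_on with
        | _ t ih =>
          intro j k m n hmn
          have h := hrel j k m n
          have hd1 : (if _ : 0 < (n:ℕ) then
              Y (f j ⟨(n:ℕ)-1, lt_of_le_of_lt (Nat.sub_le _ _) n.isLt⟩) m k else 0) = 0 := by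
            split_ifs with hn
            · exact ih (t-1) (by omega) j k m _ (by simp; omega)
            · rfl
          have hd2 : (if 0 < (m:ℕ) then
              Y (f j n) ⟨(m:ℕ)-1, lt_of_le_of_lt (Nat.sub_le _ _) m.isLt⟩ k else 0) = 0 := by
            split_ifs with hm
            · exact ih (t-1) (by omega) j k _ n (by simp; omega)
            · rfl
          rw [hd1, hd2, sub_zero] at h
          have hne : nu k - lam j ≠ 0 := sub_ne_zero.mpr fun he => hlamnu j k he.symm
          exact (mul_eq_zero.mp h).resolve_left hne
      have hYzero : ∀ x : P, Y x = 0 := by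
        intro x
        rw [← hPdecomp x, map_sum, Finset.sum_eq_zero]
        rintro n -
        rw [map_sum, Finset.sum_eq_zero]
        rintro j -
        rw [map_smul]
        have hz : Y (f j n) = 0 := by
          refine PiLp.ext fun m => ?_
          ext k
          exact key ((m:ℕ)+(n:ℕ)) j k m n le_rfl
        rw [hz, smul_zero]
      exact LinearMap.ext hYzero
    have hsurj := LinearMap.injective_iff_surjective.mp hinj
    obtain ⟨Y, hY⟩ := hsurj A.toLinearMap
    exact ⟨Y, hY⟩
  -- the block-triangular similarity
  obtain ⟨E₁, hE₁⟩ : ∃ E : (P × P) ≃ₗ[ℂ] (P × P), ∀ v : P × P,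
      E v = (v.1 + Y v.2, v.2) := by
    refine ⟨{ toFun := fun v => (v.1 + Y v.2, v.2)
              invFun := fun v => (v.1 - Y v.2, v.2)
              map_add' := ?_
              map_smul' := ?_
              left_inv := ?_
              right_inv := ?_ }, fun v => rfl⟩
    · intro a b
      refine Prod.ext ?_ rfl
      show (a + b).1 + Y ((a + b).2) = ((a.1 + Y a.2, a.2) + (b.1 + Y b.2, b.2)).1
      show a.1 + b.1 + Y (a.2 + b.2) = (a.1 + Y a.2) + (b.1 + Y b.2)
      rw [map_add]
      abel
    · intro c v
      refine Prod.ext ?_ rfl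
      show c • v.1 + Y (c • v.2) = c • (v.1 + Y v.2)
      rw [map_smul, smul_add]
    · intro v
      refine Prod.ext ?_ rfl
      show (v.1 + Y v.2) - Y v.2 = v.1
      abel
    · intro v
      refine Prod.ext ?_ rfl
      show (v.1 - Y v.2) + Y v.2 = v.1
      abel
  have part1 : ∃ X : (P × P) ≃L[ℂ] (P × P), ∀ v, X (T v) = (T₁ (X v).1, T₀ (X v).2) := by
    haveI : ContinuousSMul ℂ (P × P) := Prod.continuousSMul
    refine ⟨E₁.toContinuousLinearEquiv, ?_⟩
    intro v
    show E₁ (T v) = (T₁ (E₁ v).1, T₀ (E₁ v).2)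
    rw [hT, hE₁, hE₁]
    have hYv := LinearMap.congr_fun hY v.2
    simp only [LinearMap.sub_apply, LinearMap.comp_apply,
      ContinuousLinearMap.coe_coe] at hYv
    have hfst : (T₁ v.1 + A v.2) + Y (T₀ v.2) = T₁ (v.1 + Y v.2) := by
      rw [map_add]
      have h5 : T₁ (Y v.2) = A v.2 + Y (T₀ v.2) := by
        rw [← hYv]; abel
      rw [h5]
      abel
    exact Prod.ext hfst rfl
  refine ⟨part1, ?_⟩
  intro J hJ
  obtain ⟨E₂, hE₂⟩ : ∃ E : (P × P) ≃ₗ[ℂ] EuclideanSpace ℂ (Fin d × Fin 2 × Fin (N+1)),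
      ∀ (v : P × P) (i : Fin d × Fin 2 × Fin (N+1)), E v i =
        if i.2.1 = 0 then v.2 i.2.2 i.1
        else v.1 ⟨N - (i.2.2:ℕ), Nat.lt_succ_of_le (Nat.sub_le _ _)⟩ i.1 := by
    refine ⟨{ toFun := fun v => WithLp.toLp 2 (fun i =>
                if i.2.1 = 0 then v.2 i.2.2 i.1
                else v.1 ⟨N - (i.2.2:ℕ), Nat.lt_succ_of_le (Nat.sub_le _ _)⟩ i.1 :
                ∀ _ : Fin d × Fin 2 × Fin (N+1), ℂ)
              invFun := fun w =>
                (WithLp.toLp 2 (fun n => (WithLp.toLp 2 fun jj =>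
                    w (jj, 1, ⟨N - (n:ℕ), Nat.lt_succ_of_le (Nat.sub_le _ _)⟩) :
                    EuclideanSpace ℂ (Fin d)) : ∀ _ : Fin (N+1), EuclideanSpace ℂ (Fin d)),
                 WithLp.toLp 2 (fun n => (WithLp.toLp 2 fun jj => w (jj, 0, n) : EuclideanSpace ℂ (Fin d)) :
                    ∀ _ : Fin (N+1), EuclideanSpace ℂ (Fin d)))
              map_add' := ?_
              map_smul' := ?_
              left_inv := ?_
              right_inv := ?_ }, fun v i => rfl⟩
    · intro a b
      refine PiLp.ext fun i => ?_
      show (if i.2.1 = 0 then (a + b).2 i.2.2 i.1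
          else (a + b).1 ⟨N - (i.2.2:ℕ), Nat.lt_succ_of_le (Nat.sub_le _ _)⟩ i.1) =
        (if i.2.1 = 0 then a.2 i.2.2 i.1
          else a.1 ⟨N - (i.2.2:ℕ), Nat.lt_succ_of_le (Nat.sub_le _ _)⟩ i.1) +
        (if i.2.1 = 0 then b.2 i.2.2 i.1
          else b.1 ⟨N - (i.2.2:ℕ), Nat.lt_succ_of_le (Nat.sub_le _ _)⟩ i.1)
      split_ifs <;> rfl
    · intro c v
      refine PiLp.ext fun i => ?_
      show (if i.2.1 = 0 then (c • v).2 i.2.2 i.1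
          else (c • v).1 ⟨N - (i.2.2:ℕ), Nat.lt_succ_of_le (Nat.sub_le _ _)⟩ i.1) =
        c * (if i.2.1 = 0 then v.2 i.2.2 i.1
          else v.1 ⟨N - (i.2.2:ℕ), Nat.lt_succ_of_le (Nat.sub_le _ _)⟩ i.1)
      rw [mul_ite]
      split_ifs <;> rfl
    · intro v
      refine Prod.ext ?_ ?_
      · refine PiLp.ext fun n => PiLp.ext fun jj => ?_
        show (if (1:Fin 2) = 0 then
              v.2 (⟨N - (n:ℕ), Nat.lt_succ_of_le (Nat.sub_le _ _)⟩ : Fin (N+1)) jj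
            else v.1 ⟨N - (((⟨N - (n:ℕ), Nat.lt_succ_of_le (Nat.sub_le _ _)⟩ : Fin (N+1))) : ℕ),
              Nat.lt_succ_of_le (Nat.sub_le _ _)⟩ jj) = v.1 n jj
        rw [if_neg (by decide)]
        have hfin : (⟨N - (((⟨N - (n:ℕ), Nat.lt_succ_of_le (Nat.sub_le _ _)⟩ : Fin (N+1))) : ℕ),
            Nat.lt_succ_of_le (Nat.sub_le _ _)⟩ : Fin (N+1)) = n := by
          ext
          simp
          omega
        rw [hfin]
      · refine PiLp.ext fun n => PiLp.ext fun jj => ?_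
        show (if (0:Fin 2) = 0 then v.2 n jj
            else v.1 ⟨N - (n:ℕ), Nat.lt_succ_of_le (Nat.sub_le _ _)⟩ jj) = v.2 n jj
        rw [if_pos rfl]
    · intro w
      refine PiLp.ext fun i => ?_
      obtain ⟨jj, s, n⟩ := i
      rcases s with ⟨sv, hsv⟩
      interval_cases sv
      · show (if (⟨0, hsv⟩ : Fin 2) = 0 then w (jj, 0, n)
            else w (jj, 1, ⟨N - (((⟨N - (n:ℕ), Nat.lt_succ_of_le (Nat.sub_le _ _)⟩ :
              Fin (N+1))) : ℕ), Nat.lt_succ_of_le (Nat.sub_le _ _)⟩)) = w (jj, ⟨0, hsv⟩, n)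
        exact if_pos rfl
      · show (if (⟨1, hsv⟩ : Fin 2) = 0 then w (jj, 0, n)
            else w (jj, 1, ⟨N - (((⟨N - (n:ℕ), Nat.lt_succ_of_le (Nat.sub_le _ _)⟩ :
              Fin (N+1))) : ℕ), Nat.lt_succ_of_le (Nat.sub_le _ _)⟩)) = w (jj, ⟨1, hsv⟩, n)
        rw [if_neg (by simp [Fin.ext_iff])]
        show w (jj, 1, ⟨N - (((⟨N - (n:ℕ), Nat.lt_succ_of_le (Nat.sub_le _ _)⟩ :
              Fin (N+1))) : ℕ), Nat.lt_succ_of_le (Nat.sub_le _ _)⟩) = w (jj, 1, n)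
        refine congrArg (fun t => w (jj, 1, t)) ?_
        ext
        simp
        omega
  have hE₂T : ∀ u : P × P, E₂ (T₁ u.1, T₀ u.2) = J (E₂ u) := by
    intro u
    refine PiLp.ext fun i => ?_
    obtain ⟨jj, s, n⟩ := i
    rw [jordan_coord lam nu J hJ]
    simp only [hE₂]
    rcases s with ⟨sv, hsv⟩
    interval_cases sv
    · have h0 : ((⟨0, hsv⟩ : Fin 2) = 0) := rfl
      simp only [h0, eq_self_iff_true, if_true]
      rw [hT₀c]
    · have h1 : ¬ ((⟨1, hsv⟩ : Fin 2) = 0) := by simp [Fin.ext_iff]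
      simp only [if_neg h1]
      rw [hT₁c]
      congr 1
      by_cases hcc : (n:ℕ)+1 < N+1
      · rw [dif_pos hcc, if_pos (by simp only; omega)]
        have hfin : (⟨((⟨N - (n:ℕ), Nat.lt_succ_of_le (Nat.sub_le _ _)⟩ : Fin (N+1)) : ℕ) - 1,
            lt_of_le_of_lt (Nat.sub_le _ _) (Fin.isLt _)⟩ : Fin (N+1)) =
            (⟨N - ((n:ℕ)+1), Nat.lt_succ_of_le (Nat.sub_le _ _)⟩ : Fin (N+1)) := by
          ext
          simp only
          omega
        rw [hfin]
      · rw [dif_neg hcc, if_neg (by simp only; omega)]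
  obtain ⟨X₁, hX₁⟩ := part1
  haveI : ContinuousSMul ℂ (P × P) := Prod.continuousSMul
  refine ⟨X₁.trans E₂.toContinuousLinearEquiv, ?_⟩
  intro v
  show E₂ (X₁ (T v)) = J (E₂ (X₁ v))
  rw [hX₁ v, hE₂T]
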